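/- arXiv:2412.19540 — 6 statements merged into one kernel-verified Lean document; each statement's English description precedes it below -/
import Mathlib

section
/- Every two-dimensional subspace of the two-qubit Hilbert space ℂ² ⊗ ℂ² contains a nonzero product vector, i.e., a vector of the form u ⊗ v with u, v ∈ ℂ². -/
noncomputable section

/-- The single-qubit Hilbert space ℂ². -/
abbrev E2 := EuclideanSpace ℂ (Fin 2)

/-- The two-qubit Hilbert space ℂ² ⊗ ℂ², realized as EuclideanSpace over Fin 2 × Fin 2. -/
abbrev E4 := EuclideanSpace ℂ (Fin 2 × Fin 2)

/-- Standard basis vector of ℂ². -/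
def e (i : Fin 2) : E2 := EuclideanSpace.single i 1

/-- The simple tensor (product vector) u ⊗ v in ℂ² ⊗ ℂ². -/
def tp (u v : E2) : E4 := WithLp.toLp 2 (fun p : Fin 2 × Fin 2 => u p.1 * v p.2)

/-- The standard basis vector |ij⟩ = e_i ⊗ e_j of ℂ² ⊗ ℂ². -/
def ket (i j : Fin 2) : E4 := tp (e i) (e j)

/-- Any 2×2 array of complex numbers with vanishing determinant factors as an
outer product. -/
lemma exists_factor (a b c d : ℂ) (h : a * d = b * c) :
    ∃ u0 u1 v0 v1 : ℂ, u0*v0 = a ∧ u0*v1 = b ∧ u1*v0 = c ∧ u1*v1 = d := by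
  by_cases ha : a = 0
  · subst ha
    have h' : b * c = 0 := by linear_combination -h
    rcases mul_eq_zero.mp h' with hb | hc
    · exact ⟨0, 1, c, d, by simp [hb]⟩
    · exact ⟨b, d, 0, 1, by simp [hc]⟩
  · refine ⟨a, c, 1, b/a, by simp, ?_, by simp, ?_⟩
    · field_simp
    · field_simp; linear_combination -h

/-- A vector of E4 whose associated 2×2 matrix has vanishing determinant is a
product vector. -/
lemma rank_one (w : E4) (h : w (0,0) * w (1,1) = w (0,1) * w (1,0)) :
    ∃ u v : E2, tp u v = w := by
  obtain ⟨u0, u1, v0, v1, h1, h2, h3, h4⟩ := exists_factor _ _ _ _ h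
  refine ⟨!₂[u0, u1], !₂[v0, v1], ?_⟩
  ext p
  have : p = (p.1, p.2) := rfl
  fin_cases p <;> simpa [tp]

/-- Every two-dimensional subspace of the two-qubit Hilbert space ℂ² ⊗ ℂ² contains a
nonzero product vector u ⊗ v. -/
theorem two_dim_subspace_contains_nonzero_product_vector
    (V : Submodule ℂ E4) (hV : Module.finrank ℂ V = 2) :
    ∃ u v : E2, tp u v ≠ 0 ∧ tp u v ∈ V := by
  have : FiniteDimensional ℂ V := inferInstance
  let b : Module.Basis (Fin 2) ℂ V := Module.finBasisOfFinrankEq ℂ V hV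
  set x : E4 := (b 0 : E4) with hx
  set y : E4 := (b 1 : E4) with hy
  have key : ∃ w : E4, w ≠ 0 ∧ w ∈ V ∧ w (0,0) * w (1,1) = w (0,1) * w (1,0) := by
    by_cases hdy : y (0,0) * y (1,1) = y (0,1) * y (1,0)
    · refine ⟨y, ?_, SetLike.coe_mem _, hdy⟩
      simpa [hy, Submodule.coe_eq_zero] using b.ne_zero 1
    · set dy : ℂ := y (0,0) * y (1,1) - y (0,1) * y (1,0) with hdy'
      have hdy0 : dy ≠ 0 := sub_ne_zero.mpr hdy
      set B : ℂ := x (0,0) * y (1,1) + y (0,0) * x (1,1)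
        - x (0,1) * y (1,0) - y (0,1) * x (1,0) with hB
      set dx : ℂ := x (0,0) * x (1,1) - x (0,1) * x (1,0) with hdx
      set p : Polynomial ℂ := Polynomial.C dy * Polynomial.X ^ 2
        + Polynomial.C B * Polynomial.X + Polynomial.C dx with hp
      have hdeg : p.degree = 2 := Polynomial.degree_quadratic hdy0
      obtain ⟨z, hz⟩ := Complex.exists_root (by rw [hdeg]; norm_num)
      have hz' : dy * z ^ 2 + B * z + dx = 0 := by
        have h := hz
        simpa [hp, Polynomial.IsRoot] using h
      refine ⟨((b 0 + z • b 1 : V) : E4), ?_, SetLike.coe_mem _, ?_⟩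
      · intro hzero
        rw [Submodule.coe_eq_zero] at hzero
        have := congrArg (fun w => (b.repr w) 0) hzero
        simp [Finsupp.single_apply] at this
      · have hcoe : ((b 0 + z • b 1 : V) : E4) = x + z • y := by
          push_cast [hx, hy]; rfl
        rw [hcoe]
        have hadd : ∀ q : Fin 2 × Fin 2, (x + z • y) q = x q + z * y q := by
          intro q; rfl
        simp only [hadd]
        linear_combination hz'
  obtain ⟨w, hw0, hwV, hwd⟩ := key
  obtain ⟨u, v, huv⟩ := rank_one w hwd
  exact ⟨u, v, by rw [huv]; exact hw0, by rw [huv]; exact hwV⟩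
end
end

section
/- For any two-dimensional subspace V of ℂ² ⊗ ℂ², the set of product lines in V (one-dimensional subspaces of V spanned by a simple tensor u ⊗ v) and the set of product lines in the orthogonal complement V⊥ have the same cardinality, and this common cardinality is either 1, 2, or infinite. -/
noncomputable section

/-- The set of product lines in a subspace W: one-dimensional subspaces of W spanned by a
nonzero simple tensor u ⊗ v. -/
def productLines (W : Submodule ℂ E4) : Set (Submodule ℂ E4) :=
  {L | ∃ u v : E2, tp u v ≠ 0 ∧ L = Submodule.span ℂ {tp u v} ∧ L ≤ W}

/-! Auxiliary -/

def qf (x : E4) : ℂ := x (0,0) * x (1,1) - x (0,1) * x (1,0)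

lemma qf_tp (u v : E2) : qf (tp u v) = 0 := by
  simp only [qf, tp]
  ring

lemma E4_ext {x y : E4} (h00 : x (0,0) = y (0,0)) (h01 : x (0,1) = y (0,1))
    (h10 : x (1,0) = y (1,0)) (h11 : x (1,1) = y (1,1)) : x = y := by
  ext p
  obtain ⟨i, j⟩ := p
  fin_cases i <;> fin_cases j <;>
    first | exact h00 | exact h01 | exact h10 | exact h11

lemma tp_apply (u v : E2) (i j : Fin 2) : tp u v (i, j) = u i * v j := rfl

lemma scalar_factor {A B C D : ℂ} (h : A * D = B * C) :
    ∃ u0 u1 v0 v1 : ℂ, A = u0 * v0 ∧ B = u0 * v1 ∧ C = u1 * v0 ∧ D = u1 * v1 := by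
  by_cases hA : A ≠ 0
  · exact ⟨A, C, 1, B / A, by ring, by field_simp, by ring, by field_simp; linear_combination h⟩
  push_neg at hA
  by_cases hB : B ≠ 0
  · exact ⟨B, D, A / B, 1, by field_simp, by ring, by field_simp; linear_combination -h, by ring⟩
  push_neg at hB
  by_cases hC : C ≠ 0
  · exact ⟨A, C, 1, D / C, by ring, by rw [hB, hA]; simp, by ring, by field_simp⟩
  push_neg at hC
  exact ⟨B, D, C / D, 1, by rw [hA, hB, hC]; simp, by ring,
    by rw [hC]; simp, by ring⟩

lemma exists_tp_of_qf {x : E4} (hx : x ≠ 0) (h : qf x = 0) : ∃ u v : E2, x = tp u v := by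
  simp only [qf, sub_eq_zero] at h
  obtain ⟨u0, u1, v0, v1, hA, hB, hC, hD⟩ := scalar_factor h
  refine ⟨(WithLp.toLp 2 ![u0, u1] : E2), (WithLp.toLp 2 ![v0, v1] : E2), E4_ext ?_ ?_ ?_ ?_⟩ <;>
    simp only [tp_apply, PiLp.toLp_apply, Matrix.cons_val_zero, Matrix.cons_val_one, Matrix.head_cons] <;>
    assumption

lemma productLines_eq (W : Submodule ℂ E4) :
    productLines W =
      {L | ∃ x : E4, x ≠ 0 ∧ qf x = 0 ∧ x ∈ W ∧ L = Submodule.span ℂ {x}} := by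
  ext L
  constructor
  · rintro ⟨u, v, h0, rfl, hle⟩
    exact ⟨tp u v, h0, qf_tp u v, hle (Submodule.mem_span_singleton_self _), rfl⟩
  · rintro ⟨x, h0, hq, hxW, rfl⟩
    obtain ⟨u, v, rfl⟩ := exists_tp_of_qf h0 hq
    exact ⟨u, v, h0, rfl, by rwa [Submodule.span_singleton_le_iff_mem]⟩

/-! Bilinear form -/

def Bl : LinearMap.BilinForm ℂ E4 :=
  LinearMap.mk₂ ℂ
    (fun x y => x (0,0) * y (1,1) + x (1,1) * y (0,0) - x (0,1) * y (1,0) - x (1,0) * y (0,1))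
    (fun x x' y => by simp only [PiLp.add_apply]; ring)
    (fun c x y => by simp only [PiLp.smul_apply, smul_eq_mul]; ring)
    (fun x y y' => by simp only [PiLp.add_apply]; ring)
    (fun c x y => by simp only [PiLp.smul_apply, smul_eq_mul]; ring)

lemma Bl_apply (x y : E4) :
    Bl x y = x (0,0) * y (1,1) + x (1,1) * y (0,0) - x (0,1) * y (1,0) - x (1,0) * y (0,1) := rfl

lemma Bl_symm (x y : E4) : Bl x y = Bl y x := by simp only [Bl_apply]; ring

lemma Bl_self (x : E4) : Bl x x = 2 * qf x := by simp only [Bl_apply, qf]; ring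

lemma Bl_refl : Bl.IsRefl := fun x y h => by rwa [Bl_symm]

lemma qf_add (x y : E4) : qf (x + y) = qf x + qf y + Bl x y := by
  simp only [qf, Bl_apply, PiLp.add_apply]; ring

lemma qf_smul (c : ℂ) (x : E4) : qf (c • x) = c^2 * qf x := by
  simp only [qf, PiLp.smul_apply, smul_eq_mul]; ring

lemma Bl_nondegenerate : Bl.Nondegenerate := by
  refine (LinearMap.IsRefl.nondegenerate_iff_separatingLeft Bl_refl).mpr ?_
  intro x hx
  have h1 := hx (ket 1 1)
  have h2 := hx (ket 1 0)
  have h3 := hx (ket 0 1)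
  have h4 := hx (ket 0 0)
  simp only [Bl_apply, ket, tp, e, EuclideanSpace.single_apply] at h1 h2 h3 h4
  norm_num at h1 h2 h3 h4
  refine E4_ext ?_ ?_ ?_ ?_ <;> simp only [h1, h2, h3, h4, PiLp.zero_apply]

/-! The antilinear spin-flip map K -/

instance : RingHomSurjective (starRingEnd ℂ) := ⟨fun y => ⟨star y, by simp⟩⟩

def sgn (p : Fin 2 × Fin 2) : ℂ := if p.1 = p.2 then 1 else -1

def K : E4 →ₛₗ[starRingEnd ℂ] E4 where
  toFun x := (WithLp.toLp 2 (fun p => sgn p * star (x (1 - p.1, 1 - p.2))) : E4)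
  map_add' x y := by
    ext p
    simp only [PiLp.add_apply, PiLp.toLp_apply, star_add]
    ring
  map_smul' c x := by
    ext p
    simp only [PiLp.smul_apply, PiLp.toLp_apply, smul_eq_mul, star_mul', RingHom.id_apply, starRingEnd_apply]
    ring

lemma Kp (x : E4) (i j : Fin 2) : K x (i, j) = sgn (i, j) * star (x (1 - i, 1 - j)) := rfl

lemma K00 (x : E4) : K x (0,0) = star (x (1,1)) := by
  rw [Kp, show (1-0 : Fin 2) = 1 from rfl, show sgn (0,0) = 1 from rfl, one_mul]

lemma K01 (x : E4) : K x (0,1) = -star (x (1,0)) := by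
  rw [Kp, show (1-0 : Fin 2) = 1 from rfl, show (1-1 : Fin 2) = 0 from rfl,
    show sgn (0,1) = -1 from rfl, neg_one_mul]

lemma K10 (x : E4) : K x (1,0) = -star (x (0,1)) := by
  rw [Kp, show (1-0 : Fin 2) = 1 from rfl, show (1-1 : Fin 2) = 0 from rfl,
    show sgn (1,0) = -1 from rfl, neg_one_mul]

lemma K11 (x : E4) : K x (1,1) = star (x (0,0)) := by
  rw [Kp, show (1-1 : Fin 2) = 0 from rfl, show sgn (1,1) = 1 from rfl, one_mul]

lemma K_invol (x : E4) : K (K x) = x := by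
  refine E4_ext ?_ ?_ ?_ ?_
  · rw [K00, K11, star_star]
  · rw [K01, K10, star_neg, star_star, neg_neg]
  · rw [K10, K01, star_neg, star_star, neg_neg]
  · rw [K11, K00, star_star]

lemma K_injective : Function.Injective K :=
  Function.LeftInverse.injective K_invol

lemma qf_K (x : E4) : qf (K x) = star (qf x) := by
  simp only [qf, K00, K01, K10, K11, star_sub, star_mul']
  ring

lemma Bl_K (x y : E4) : Bl (K x) (K y) = star (Bl x y) := by
  simp only [Bl_apply, K00, K01, K10, K11, star_sub, star_add, star_mul']
  ring

lemma inner_eq_Bl_K (x y : E4) : (inner ℂ x y : ℂ) = Bl (K x) y := by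
  rw [PiLp.inner_apply]
  simp only [RCLike.inner_apply]
  rw [Fintype.sum_prod_type]
  simp only [Fin.sum_univ_two]
  simp only [Bl_apply, K00, K01, K10, K11, starRingEnd_apply]
  ring

/-! Basis pairs for 2-dimensional subspaces -/

def IsBP (W : Submodule ℂ E4) (a b : E4) : Prop :=
  a ∈ W ∧ b ∈ W ∧ (∀ s t : ℂ, s • a + t • b = 0 → s = 0 ∧ t = 0) ∧
    ∀ x ∈ W, ∃ s t : ℂ, x = s • a + t • b

lemma bp_of_finrank {W : Submodule ℂ E4} (hW : Module.finrank ℂ W = 2) :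
    ∃ a b : E4, IsBP W a b := by
  have B := Module.finBasisOfFinrankEq ℂ W hW
  refine ⟨(B 0 : E4), (B 1 : E4), (B 0).2, (B 1).2, ?_, ?_⟩
  · intro s t hst
    have hz : s • B 0 + t • B 1 = (0 : W) := by
      apply Subtype.ext
      push_cast
      exact hst
    have h := Fintype.linearIndependent_iff.mp B.linearIndependent ![s, t] ?_
    · exact ⟨h 0, h 1⟩
    · rw [Fin.sum_univ_two]
      exact hz
  · intro x hx
    refine ⟨B.repr ⟨x, hx⟩ 0, B.repr ⟨x, hx⟩ 1, ?_⟩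
    have h := B.sum_repr ⟨x, hx⟩
    rw [Fin.sum_univ_two] at h
    calc x = ((⟨x, hx⟩ : W) : E4) := rfl
    _ = ((B.repr ⟨x, hx⟩ 0 • B 0 + B.repr ⟨x, hx⟩ 1 • B 1 : W) : E4) := by rw [h]
    _ = _ := by push_cast; ring_nf

lemma bp_span {W : Submodule ℂ E4} {a b : E4} (h : IsBP W a b) :
    W = Submodule.span ℂ (Set.range ![a, b]) := by
  obtain ⟨ha, hb, hind, hspan⟩ := h
  apply le_antisymm
  · intro x hx
    obtain ⟨s, t, rfl⟩ := hspan x hx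
    apply Submodule.add_mem
    · exact Submodule.smul_mem _ _ (Submodule.subset_span ⟨0, rfl⟩)
    · exact Submodule.smul_mem _ _ (Submodule.subset_span ⟨1, rfl⟩)
  · rw [Submodule.span_le]
    rintro x ⟨i, rfl⟩
    fin_cases i
    · exact ha
    · exact hb

lemma finrank_of_bp {W : Submodule ℂ E4} {a b : E4} (h : IsBP W a b) :
    Module.finrank ℂ W = 2 := by
  rw [bp_span h]
  rw [finrank_span_eq_card (LinearIndependent.pair_iff.mpr h.2.2.1)]
  simp

lemma bp_mapK {W : Submodule ℂ E4} {a b : E4} (h : IsBP W a b) :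
    IsBP (W.map K) (K a) (K b) := by
  obtain ⟨ha, hb, hind, hspan⟩ := h
  refine ⟨⟨a, ha, rfl⟩, ⟨b, hb, rfl⟩, ?_, ?_⟩
  · intro s t hst
    have : K (star s • a + star t • b) = 0 := by
      rw [map_add, LinearMap.map_smulₛₗ, LinearMap.map_smulₛₗ]
      simpa using hst
    have h0 : star s • a + star t • b = 0 := by
      apply K_injective
      rw [this, map_zero]
    obtain ⟨h1, h2⟩ := hind _ _ h0
    constructor
    · simpa using congrArg star h1
    · simpa using congrArg star h2
  · rintro x ⟨y, hy, rfl⟩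
    obtain ⟨s, t, rfl⟩ := hspan y hy
    refine ⟨star s, star t, ?_⟩
    rw [map_add, LinearMap.map_smulₛₗ, LinearMap.map_smulₛₗ]
    simp

/-! Quadratic pencil on a 2-dimensional subspace -/

def TotIso (W : Submodule ℂ E4) : Prop := ∀ x ∈ W, qf x = 0

def Deg (W : Submodule ℂ E4) : Prop := ∃ x, x ∈ W ∧ x ≠ 0 ∧ ∀ y ∈ W, Bl x y = 0

lemma qf_comb (s t : ℂ) (a b : E4) :
    qf (s • a + t • b) = s^2 * qf a + s * t * Bl a b + t^2 * qf b := by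
  rw [qf_add, qf_smul, qf_smul, LinearMap.map_smulₛₗ]
  simp only [RingHom.id_apply, LinearMap.smul_apply, smul_eq_mul, LinearMap.map_smul]
  ring

lemma Bl_comb (s t s' t' : ℂ) (a b : E4) :
    Bl (s • a + t • b) (s' • a + t' • b) =
      s * s' * (2 * qf a) + (s * t' + t * s') * Bl a b + t * t' * (2 * qf b) := by
  simp only [map_add, LinearMap.map_smul, LinearMap.add_apply, LinearMap.smul_apply,
    smul_eq_mul, map_smul]
  rw [← Bl_self a, ← Bl_self b, Bl_symm b a]
  ring

lemma totIso_iff {W : Submodule ℂ E4} {a b : E4} (h : IsBP W a b) :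
    TotIso W ↔ qf a = 0 ∧ Bl a b = 0 ∧ qf b = 0 := by
  obtain ⟨ha, hb, hind, hspan⟩ := h
  constructor
  · intro hT
    have h1 := hT a ha
    have h2 := hT b hb
    have h3 := hT (a + b) (W.add_mem ha hb)
    rw [qf_add] at h3
    exact ⟨h1, by rw [h1, h2] at h3; simpa using h3, h2⟩
  · rintro ⟨h1, h2, h3⟩ x hx
    obtain ⟨s, t, rfl⟩ := hspan x hx
    rw [qf_comb, h1, h2, h3]
    ring

lemma deg_iff {W : Submodule ℂ E4} {a b : E4} (h : IsBP W a b) :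
    Deg W ↔ (Bl a b)^2 = 4 * qf a * qf b := by
  obtain ⟨ha, hb, hind, hspan⟩ := h
  constructor
  · rintro ⟨x, hxW, hx0, hall⟩
    obtain ⟨s, t, rfl⟩ := hspan x hxW
    have h1 : s * (2 * qf a) + t * Bl a b = 0 := by
      have := hall a ha
      calc s * (2 * qf a) + t * Bl a b
          = Bl (s • a + t • b) ((1:ℂ) • a + (0:ℂ) • b) := by rw [Bl_comb]; ring
        _ = 0 := by rw [show (1:ℂ) • a + (0:ℂ) • b = a by simp]; exact this
    have h2 : s * Bl a b + t * (2 * qf b) = 0 := by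
      have := hall b hb
      calc s * Bl a b + t * (2 * qf b)
          = Bl (s • a + t • b) ((0:ℂ) • a + (1:ℂ) • b) := by rw [Bl_comb]; ring
        _ = 0 := by rw [show (0:ℂ) • a + (1:ℂ) • b = b by simp]; exact this
    have key : s * t * ((Bl a b)^2 - 4 * qf a * qf b) = 0 := by
      linear_combination (s * Bl a b) * h1 - (2 * s * qf a) * h2
    by_cases hs : s = 0
    · have ht : t ≠ 0 := fun ht => hx0 (by rw [hs, ht]; simp)
      rw [hs] at h1 h2
      simp only [zero_mul, mul_zero, zero_add, add_zero] at h1 h2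
      have hb0 : Bl a b = 0 := (mul_eq_zero.mp h1).resolve_left ht
      have hg0 : qf b = 0 := by
        have := (mul_eq_zero.mp h2).resolve_left ht
        linear_combination this / 2
      rw [hb0, hg0]; ring
    · by_cases ht : t = 0
      · rw [ht] at h1 h2
        simp only [zero_mul, mul_zero, zero_add, add_zero] at h1 h2
        have hb0 : Bl a b = 0 := (mul_eq_zero.mp h2).resolve_left hs
        have ha0 : qf a = 0 := by
          have := (mul_eq_zero.mp h1).resolve_left hs
          linear_combination this / 2
        rw [hb0, ha0]; ring
      · have h4 := (mul_eq_zero.mp key).resolve_left (mul_ne_zero hs ht)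
        linear_combination h4
  · intro hd
    by_cases hα0 : qf a = 0
    · have hβ0 : Bl a b = 0 := by
        have : (Bl a b)^2 = 0 := by rw [hd, hα0]; ring
        exact pow_eq_zero_iff (by norm_num) |>.mp this
      refine ⟨a, ha, ?_, ?_⟩
      · intro h0
        have := (hind 1 0 (by simpa using h0)).1
        norm_num at this
      · intro y hy
        obtain ⟨s', t', rfl⟩ := hspan y hy
        calc Bl a (s' • a + t' • b) = Bl ((1:ℂ) • a + (0:ℂ) • b) (s' • a + t' • b) := by
              rw [show (1:ℂ) • a + (0:ℂ) • b = a by simp]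
          _ = 0 := by rw [Bl_comb]; linear_combination (2 * s') * hα0 + t' * hβ0
    · refine ⟨Bl a b • a - (2 * qf a) • b, ?_, ?_, ?_⟩
      · exact Submodule.sub_mem _ (Submodule.smul_mem _ _ ha) (Submodule.smul_mem _ _ hb)
      · intro h0
        have h1 : Bl a b • a + (-(2 * qf a)) • b = 0 := by
          rw [neg_smul, ← sub_eq_add_neg]; exact h0
        have h2 := (hind _ _ h1).2
        rw [neg_eq_zero] at h2
        exact hα0 (by linear_combination h2 / 2)
      · intro y hy
        obtain ⟨s', t', rfl⟩ := hspan y hy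
        have hrw : Bl a b • a - (2 * qf a) • b = Bl a b • a + (-(2 * qf a)) • b := by
          rw [neg_smul, ← sub_eq_add_neg]
        rw [hrw, Bl_comb]
        linear_combination t' * hd

/-! Factoring binary quadratics over ℂ -/

lemma quad_factor {α β γ : ℂ} (h : ¬(α = 0 ∧ β = 0 ∧ γ = 0)) :
    ∃ a₁ b₁ a₂ b₂ : ℂ, ¬(a₁ = 0 ∧ b₁ = 0) ∧ ¬(a₂ = 0 ∧ b₂ = 0) ∧
      ∀ s t : ℂ, α * s^2 + β * (s * t) + γ * t^2 = (a₁ * s + b₁ * t) * (a₂ * s + b₂ * t) := by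
  by_cases hα : α = 0
  · by_cases hγ : γ = 0
    · have hβ : β ≠ 0 := fun hβ => h ⟨hα, hβ, hγ⟩
      exact ⟨β, 0, 0, 1, fun hc => hβ hc.1, by simp, fun s t => by rw [hα, hγ]; ring⟩
    · exact ⟨0, 1, β, γ, by simp, fun hc => hγ hc.2, fun s t => by rw [hα]; ring⟩
  · obtain ⟨w, hw⟩ := IsAlgClosed.exists_pow_nat_eq (k := ℂ) (β^2 - 4 * α * γ) (n := 2) (by norm_num)
    refine ⟨α, (β - w) / 2, 1, (β + w) / (2 * α), fun hc => hα hc.1, by simp, fun s t => ?_⟩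
    field_simp
    ring_nf
    linear_combination (t^2) * hw

/-! Classification of product lines in a 2-dimensional subspace -/

lemma prop2 {a₁ b₁ s t : ℂ} (h1 : ¬(a₁ = 0 ∧ b₁ = 0)) (h2 : ¬(s = 0 ∧ t = 0))
    (h : a₁ * s + b₁ * t = 0) : ∃ c : ℂ, c ≠ 0 ∧ s = c * b₁ ∧ t = -(c * a₁) := by
  by_cases hb : b₁ = 0
  · have ha : a₁ ≠ 0 := fun ha => h1 ⟨ha, hb⟩
    have hs : s = 0 := by
      rw [hb] at h
      simpa [ha] using h
    have ht : t ≠ 0 := fun ht => h2 ⟨hs, ht⟩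
    refine ⟨-t / a₁, by simp [ht, ha], by rw [hb, hs]; ring, by field_simp⟩
  · have hs : s ≠ 0 ∨ t ≠ 0 := by
      by_contra hc
      push_neg at hc
      exact h2 ⟨hc.1, hc.2⟩
    have hsne : s ≠ 0 := by
      intro hs0
      rw [hs0] at h
      simp only [mul_zero, zero_add] at h
      rcases mul_eq_zero.mp h with h' | h'
      · exact hb h'
      · exact h2 ⟨hs0, h'⟩
    refine ⟨s / b₁, by simp [hsne, hb], by field_simp, ?_⟩
    field_simp
    linear_combination h

lemma span_smul_ne {x : E4} {c : ℂ} (hc : c ≠ 0) :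
    Submodule.span ℂ {c • x} = Submodule.span ℂ {x} :=
  Submodule.span_singleton_smul_eq (isUnit_iff_ne_zero.mpr hc) x

lemma classify2 {W : Submodule ℂ E4} {a b : E4} (h : IsBP W a b) (hni : ¬ TotIso W) :
    (Deg W ∧ Cardinal.mk (productLines W) = 1) ∨
      (¬ Deg W ∧ Cardinal.mk (productLines W) = 2) := by
  obtain ⟨ha, hb, hind, hspan⟩ := h
  have hnz : ¬(qf a = 0 ∧ Bl a b = 0 ∧ qf b = 0) := fun hc =>
    hni ((totIso_iff ⟨ha, hb, hind, hspan⟩).mpr hc)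
  obtain ⟨a₁, b₁, a₂, b₂, h₁, h₂, hfac⟩ := quad_factor hnz
  set x₁ := b₁ • a - a₁ • b with hx₁
  set x₂ := b₂ • a - a₂ • b with hx₂
  have hmem : ∀ p q : ℂ, ¬(p = 0 ∧ q = 0) → (q • a - p • b) ≠ 0 ∧ (q • a - p • b) ∈ W := by
    intro p q hpq
    constructor
    · intro h0
      have : q • a + (-p) • b = 0 := by rwa [neg_smul, ← sub_eq_add_neg]
      obtain ⟨hq, hp⟩ := hind _ _ this
      exact hpq ⟨by simpa using hp, hq⟩
    · exact Submodule.sub_mem _ (Submodule.smul_mem _ _ ha) (Submodule.smul_mem _ _ hb)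
  have hqf : ∀ p q : ℂ, qf (q • a - p • b) =
      (a₁ * q + b₁ * (-p)) * (a₂ * q + b₂ * (-p)) := by
    intro p q
    rw [show q • a - p • b = q • a + (-p) • b by rw [neg_smul, ← sub_eq_add_neg], qf_comb,
      ← hfac]
    ring
  have hq1 : qf x₁ = 0 := by rw [hx₁, hqf]; ring
  have hq2 : qf x₂ = 0 := by rw [hx₂, hqf]; ring
  set L₁ := Submodule.span ℂ {x₁} with hL₁
  set L₂ := Submodule.span ℂ {x₂} with hL₂
  have hset : productLines W = {L₁, L₂} := by
    rw [productLines_eq]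
    ext L
    constructor
    · rintro ⟨x, hx0, hq, hxW, rfl⟩
      obtain ⟨s, t, rfl⟩ := hspan x hxW
      have hst : ¬(s = 0 ∧ t = 0) := by
        rintro ⟨rfl, rfl⟩
        simp at hx0
      rw [qf_comb] at hq
      have hq' : (a₁ * s + b₁ * t) * (a₂ * s + b₂ * t) = 0 := by
        rw [← hfac s t]
        linear_combination hq
      rcases mul_eq_zero.mp hq' with hr | hr
      · left
        obtain ⟨c, hc, hs, ht⟩ := prop2 h₁ hst hr
        have hEq : s • a + t • b = c • x₁ := by
          rw [hs, ht, hx₁, smul_sub, smul_smul, smul_smul, neg_smul, ← sub_eq_add_neg]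
        rw [hEq, span_smul_ne hc]
      · right
        obtain ⟨c, hc, hs, ht⟩ := prop2 h₂ hst hr
        have hEq : s • a + t • b = c • x₂ := by
          rw [hs, ht, hx₂, smul_sub, smul_smul, smul_smul, neg_smul, ← sub_eq_add_neg]
        rw [hEq, span_smul_ne hc]
        rfl
    · have m1 : ¬(a₁ = 0 ∧ b₁ = 0) → (x₁ ≠ 0 ∧ x₁ ∈ W) := hmem a₁ b₁
      have m2 : ¬(a₂ = 0 ∧ b₂ = 0) → (x₂ ≠ 0 ∧ x₂ ∈ W) := hmem a₂ b₂
      rintro (rfl | hL)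
      · exact ⟨x₁, (m1 h₁).1, hq1, (m1 h₁).2, rfl⟩
      · rw [Set.mem_singleton_iff] at hL
        rw [hL]
        exact ⟨x₂, (m2 h₂).1, hq2, (m2 h₂).2, rfl⟩
  have hA : qf a = a₁ * a₂ := by linear_combination hfac 1 0
  have hC : qf b = b₁ * b₂ := by linear_combination hfac 0 1
  have hB : Bl a b = a₁ * b₂ + a₂ * b₁ := by
    linear_combination hfac 1 1 - hfac 1 0 - hfac 0 1
  have hdeg2 : Deg W ↔ a₁ * b₂ - a₂ * b₁ = 0 := by
    rw [deg_iff ⟨ha, hb, hind, hspan⟩, hA, hB, hC]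
    constructor
    · intro hq
      have : (a₁ * b₂ - a₂ * b₁)^2 = 0 := by linear_combination hq
      exact pow_eq_zero_iff two_ne_zero |>.mp this
    · intro hz
      linear_combination (a₁ * b₂ - a₂ * b₁) * hz
  have hLL : L₁ = L₂ ↔ a₁ * b₂ - a₂ * b₁ = 0 := by
    constructor
    · intro hE
      have hx1m : x₁ ∈ L₂ := by
        rw [← hE]
        exact Submodule.mem_span_singleton_self _
      obtain ⟨c, hc⟩ := Submodule.mem_span_singleton.mp hx1m
      have h0 : (c * b₂ - b₁) • a + (a₁ - c * a₂) • b = 0 := by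
        have hc' : c • (b₂ • a - a₂ • b) = b₁ • a - a₁ • b := by
          rw [← hx₂, ← hx₁]; exact hc
        have hmod : (c * b₂ - b₁) • a + (a₁ - c * a₂) • b =
            c • (b₂ • a - a₂ • b) - (b₁ • a - a₁ • b) := by module
        rw [hmod, hc', sub_self]
      obtain ⟨e1, e2⟩ := hind _ _ h0
      have hb1 : b₁ = c * b₂ := by linear_combination -e1
      have ha1 : a₁ = c * a₂ := by linear_combination e2
      rw [hb1, ha1]
      ring
    · intro hz
      have hpar : a₂ * b₁ + b₂ * (-a₁) = 0 := by linear_combination -hz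
      have hne : ¬(b₁ = 0 ∧ -a₁ = 0) := by
        rintro ⟨e1, e2⟩
        exact h₁ ⟨by simpa using e2, e1⟩
      obtain ⟨c, hc, hs, ht⟩ := prop2 h₂ hne hpar
      have hEq : x₁ = c • x₂ := by
        rw [hx₁, hx₂, hs, show a₁ = c * a₂ by linear_combination -ht, smul_sub,
          smul_smul, smul_smul]
      rw [hL₁, hL₂, hEq, span_smul_ne hc]
  by_cases hdeg : Deg W
  · left
    refine ⟨hdeg, ?_⟩
    rw [hset, show L₁ = L₂ from hLL.mpr (hdeg2.mp hdeg), Set.pair_eq_singleton,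
      Cardinal.mk_singleton]
  · right
    refine ⟨hdeg, ?_⟩
    have hne : L₁ ≠ L₂ := fun hE => hdeg (hdeg2.mpr (hLL.mp hE))
    rw [hset, Cardinal.mk_insert (by simpa using hne), Cardinal.mk_singleton,
      one_add_one_eq_two]

lemma totIso_infinite {W : Submodule ℂ E4} {a b : E4} (h : IsBP W a b) (hT : TotIso W) :
    (productLines W).Infinite := by
  obtain ⟨ha, hb, hind, hspan⟩ := h
  apply Set.infinite_of_injective_forall_mem
    (f := fun t : ℂ => Submodule.span ℂ {a + t • b})
  · intro t t' hE
    simp only at hE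
    have hm : a + t • b ∈ Submodule.span ℂ {a + t' • b} := by
      rw [← hE]
      exact Submodule.mem_span_singleton_self _
    obtain ⟨c, hc⟩ := Submodule.mem_span_singleton.mp hm
    have h0 : (c - 1) • a + (c * t' - t) • b = 0 := by
      rw [show (c - 1) • a + (c * t' - t) • b = c • (a + t' • b) - (a + t • b) by module, hc,
        sub_self]
    obtain ⟨e1, e2⟩ := hind _ _ h0
    have : c = 1 := by linear_combination e1
    rw [this] at e2
    linear_combination -e2
  · intro t
    rw [productLines_eq]
    refine ⟨a + t • b, ?_, ?_, ?_, rfl⟩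
    · intro h0
      have : (1 : ℂ) • a + t • b = 0 := by simpa using h0
      have := (hind _ _ this).1
      norm_num at this
    · exact hT _ (Submodule.add_mem _ ha (Submodule.smul_mem _ _ hb))
    · exact Submodule.add_mem _ ha (Submodule.smul_mem _ _ hb)

/-! Orthogonal complements -/

lemma finrank_E4 : Module.finrank ℂ E4 = 4 := by
  simp [finrank_euclideanSpace]

lemma ortho_eq (V : Submodule ℂ E4) : Vᗮ = Bl.orthogonal (V.map K) := by
  ext x
  rw [Submodule.mem_orthogonal, LinearMap.BilinForm.mem_orthogonal_iff]
  constructor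
  · rintro h y ⟨z, hz, rfl⟩
    have := h z hz
    rwa [inner_eq_Bl_K] at this
  · intro h u hu
    rw [inner_eq_Bl_K]
    exact h (K u) ⟨u, hu, rfl⟩

lemma mapK_mapK (V : Submodule ℂ E4) : (V.map K).map K = V := by
  ext x
  constructor
  · rintro ⟨y, ⟨z, hz, rfl⟩, rfl⟩
    rwa [K_invol]
  · intro hx
    exact ⟨K x, ⟨x, hx, rfl⟩, K_invol x⟩

lemma totIso_mapK {V : Submodule ℂ E4} : TotIso (V.map K) ↔ TotIso V := by
  constructor
  · intro h x hx
    have := h (K x) ⟨x, hx, rfl⟩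
    rw [qf_K, star_eq_zero] at this
    exact this
  · rintro h x ⟨y, hy, rfl⟩
    rw [qf_K, h y hy, star_zero]

lemma deg_mapK {V : Submodule ℂ E4} : Deg (V.map K) ↔ Deg V := by
  constructor
  · rintro ⟨x, ⟨z, hz, rfl⟩, hx0, hall⟩
    refine ⟨z, hz, fun h0 => hx0 (by rw [h0, map_zero]), ?_⟩
    intro y hy
    have := hall (K y) ⟨y, hy, rfl⟩
    rwa [Bl_K, star_eq_zero] at this
  · rintro ⟨x, hx, hx0, hall⟩
    refine ⟨K x, ⟨x, hx, rfl⟩, fun h0 => hx0 (K_injective (by rw [h0, map_zero])), ?_⟩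
    rintro y ⟨z, hz, rfl⟩
    rw [Bl_K, hall z hz, star_zero]

lemma orth_totIso {W : Submodule ℂ E4} {a b : E4} (h : IsBP W a b) (hT : TotIso W) :
    Bl.orthogonal W = W := by
  have hle : W ≤ Bl.orthogonal W := by
    intro x hx
    rw [LinearMap.BilinForm.mem_orthogonal_iff]
    intro y hy
    have e := qf_add y x
    rw [hT _ (W.add_mem hy hx), hT _ hy, hT _ hx] at e
    show Bl y x = 0
    linear_combination -e
  have hfr : Module.finrank ℂ (Bl.orthogonal W) = 2 := by
    rw [LinearMap.BilinForm.finrank_orthogonal Bl_nondegenerate, finrank_E4,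
      finrank_of_bp h]
  exact (Submodule.eq_of_le_of_finrank_le hle (by rw [hfr, finrank_of_bp h])).symm

lemma not_totIso_orth {W : Submodule ℂ E4} {a b : E4} (h : IsBP W a b) (hni : ¬ TotIso W) :
    ¬ TotIso (Bl.orthogonal W) := by
  intro hT
  apply hni
  have hfr : Module.finrank ℂ (Bl.orthogonal W) = 2 := by
    rw [LinearMap.BilinForm.finrank_orthogonal Bl_nondegenerate, finrank_E4,
      finrank_of_bp h]
  obtain ⟨a', b', h'⟩ := bp_of_finrank hfr
  have e := orth_totIso h' hT
  rw [LinearMap.BilinForm.orthogonal_orthogonal Bl_nondegenerate Bl_refl] at e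
  exact fun x hx => hT x (e ▸ hx)

lemma deg_rad (U : Submodule ℂ E4) :
    Deg U ↔ ∃ x, x ≠ 0 ∧ x ∈ U ∧ x ∈ Bl.orthogonal U := by
  constructor
  · rintro ⟨x, hxU, hx0, hall⟩
    refine ⟨x, hx0, hxU, ?_⟩
    rw [LinearMap.BilinForm.mem_orthogonal_iff]
    intro y hy
    show Bl y x = 0
    rw [Bl_symm]
    exact hall y hy
  · rintro ⟨x, hx0, hxU, hxO⟩
    refine ⟨x, hxU, hx0, fun y hy => ?_⟩
    rw [Bl_symm]
    exact (LinearMap.BilinForm.mem_orthogonal_iff.mp hxO) y hy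

lemma deg_orth {W : Submodule ℂ E4} : Deg W ↔ Deg (Bl.orthogonal W) := by
  rw [deg_rad, deg_rad, LinearMap.BilinForm.orthogonal_orthogonal Bl_nondegenerate Bl_refl]
  constructor
  · rintro ⟨x, h0, h1, h2⟩
    exact ⟨x, h0, h2, h1⟩
  · rintro ⟨x, h0, h1, h2⟩
    exact ⟨x, h0, h2, h1⟩

lemma mapK_submodule_injective :
    Function.Injective (fun L : Submodule ℂ E4 => L.map K) := by
  intro L L' hE
  have := congrArg (fun M : Submodule ℂ E4 => M.map K) hE
  simpa [mapK_mapK] using this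

lemma plines_mapK (V : Submodule ℂ E4) :
    productLines (V.map K) = (fun L : Submodule ℂ E4 => L.map K) '' productLines V := by
  ext L
  constructor
  · rw [productLines_eq]
    rintro ⟨x, hx0, hq, ⟨y, hy, rfl⟩, rfl⟩
    refine ⟨Submodule.span ℂ {y}, ?_, ?_⟩
    · rw [productLines_eq]
      refine ⟨y, fun h0 => hx0 (by rw [h0, map_zero]), ?_, hy, rfl⟩
      have := hq
      rwa [qf_K, star_eq_zero] at this
    · show Submodule.map K (Submodule.span ℂ {y}) = Submodule.span ℂ {K y}
      rw [Submodule.map_span, Set.image_singleton]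
  · rintro ⟨L', hL', rfl⟩
    rw [productLines_eq] at hL' ⊢
    obtain ⟨x, hx0, hq, hxW, rfl⟩ := hL'
    refine ⟨K x, fun h0 => hx0 (K_injective (by rw [h0, map_zero])), ?_, ⟨x, hxW, rfl⟩, ?_⟩
    · rw [qf_K, hq, star_zero]
    · show Submodule.map K (Submodule.span ℂ {x}) = Submodule.span ℂ {K x}
      rw [Submodule.map_span, Set.image_singleton]

/-- For any two-dimensional subspace V of ℂ² ⊗ ℂ², the set of product lines in V and the
set of product lines in V⊥ have the same cardinality, and this common cardinality is
either 1, 2, or infinite. -/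
theorem productLines_card_eq_and_one_two_or_infinite
    (V : Submodule ℂ E4) (hV : Module.finrank ℂ V = 2) :
    Cardinal.mk (productLines V) = Cardinal.mk (productLines Vᗮ) ∧
      (Cardinal.mk (productLines V) = 1 ∨ Cardinal.mk (productLines V) = 2 ∨
        (productLines V).Infinite) := by
  obtain ⟨a, b, hbp⟩ := bp_of_finrank hV
  have hbpK := bp_mapK hbp
  have horth := ortho_eq V
  have hmkK : Cardinal.mk (productLines V) = Cardinal.mk (productLines (V.map K)) := by
    rw [plines_mapK]
    exact (Cardinal.mk_image_eq mapK_submodule_injective).symm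
  by_cases hT : TotIso V
  · have hTK : TotIso (V.map K) := totIso_mapK.mpr hT
    have hperp : Vᗮ = V.map K := by rw [horth, orth_totIso hbpK hTK]
    refine ⟨by rw [hperp]; exact hmkK, Or.inr (Or.inr (totIso_infinite hbp hT))⟩
  · have hTK : ¬ TotIso (V.map K) := fun h => hT (totIso_mapK.mp h)
    have hTO : ¬ TotIso (Bl.orthogonal (V.map K)) := not_totIso_orth hbpK hTK
    have hfrO : Module.finrank ℂ (Bl.orthogonal (V.map K)) = 2 := by
      rw [LinearMap.BilinForm.finrank_orthogonal Bl_nondegenerate, finrank_E4,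
        finrank_of_bp hbpK]
    obtain ⟨a', b', hbpO⟩ := bp_of_finrank hfrO
    have hdeq : Deg V ↔ Deg (Bl.orthogonal (V.map K)) := by
      rw [← deg_mapK (V := V)]
      exact deg_orth
    rcases classify2 hbp hT with ⟨hdV, hmk⟩ | ⟨hdV, hmk⟩
    · rcases classify2 hbpO hTO with ⟨_, hmk2⟩ | ⟨hnd, _⟩
      · exact ⟨by rw [horth, hmk2, hmk], Or.inl hmk⟩
      · exact absurd (hdeq.mp hdV) hnd
    · rcases classify2 hbpO hTO with ⟨hd, _⟩ | ⟨_, hmk2⟩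
      · exact absurd (hdeq.mpr hd) hdV
      · exact ⟨by rw [horth, hmk2, hmk], Or.inr (Or.inl hmk)⟩
end
end

section
/- If a two-dimensional subspace V of ℂ² ⊗ ℂ² is spanned by two linearly independent product vectors, then its orthogonal complement V⊥ is also spanned by two product vectors. Concretely, if V = span{a ⊗ b, c ⊗ d} with a ⊗ b and c ⊗ d linearly independent, then the product vectors ā ⊗ d̄ and c̄ ⊗ b̄ lie in V⊥ and span V⊥, where for a nonzero u ∈ ℂ², ū denotes a nonzero vector orthogonal to u. -/
noncomputable section

lemma inner_tp (u v u' v' : E2) :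
    (inner ℂ (tp u v) (tp u' v') : ℂ) = inner ℂ u u' * inner ℂ v v' := by
  simp only [tp, PiLp.inner_apply, PiLp.toLp_apply, RCLike.inner_apply, map_mul]
  rw [Fintype.sum_prod_type, Finset.sum_mul_sum]
  exact Finset.sum_congr rfl fun i _ => Finset.sum_congr rfl fun j _ => by ring

lemma exists_ne_zero {u : E2} (hu : u ≠ 0) : ∃ i, u i ≠ 0 := by
  by_contra h; push_neg at h; exact hu (PiLp.ext (by simpa using h))

lemma tp_ne_zero {u v : E2} (hu : u ≠ 0) (hv : v ≠ 0) : tp u v ≠ 0 := by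
  obtain ⟨i, hi⟩ := exists_ne_zero hu
  obtain ⟨j, hj⟩ := exists_ne_zero hv
  intro h
  have := congrArg (fun w : E4 => w (i, j)) h
  simp only [tp, PiLp.toLp_apply, PiLp.zero_apply] at this
  exact mul_ne_zero hi hj this

lemma tp_smul_smul (μ ν : ℂ) (u v : E2) : tp (μ • u) (ν • v) = (μ * ν) • tp u v := by
  ext p
  simp [tp]
  ring

/-- In ℂ², two vectors orthogonal to a fixed nonzero vector are parallel. -/
lemma parallel_of_orth {v x y : E2} (hv : v ≠ 0) (hx : x ≠ 0)
    (hxv : (inner ℂ x v : ℂ) = 0) (hyv : (inner ℂ y v : ℂ) = 0) : ∃ μ : ℂ, y = μ • x := by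
  have hxm : x ∈ (Submodule.span ℂ {v})ᗮ :=
    Submodule.mem_orthogonal_singleton_iff_inner_left.mpr hxv
  have hym : y ∈ (Submodule.span ℂ {v})ᗮ :=
    Submodule.mem_orthogonal_singleton_iff_inner_left.mpr hyv
  have h1 : Module.finrank ℂ (Submodule.span ℂ {v})ᗮ = 1 := by
    have := Submodule.finrank_add_finrank_orthogonal (Submodule.span ℂ {v})
    rw [finrank_span_singleton hv] at this
    simp [finrank_euclideanSpace] at this
    omega
  have hle : Submodule.span ℂ {x} ≤ (Submodule.span ℂ {v})ᗮ := by
    rw [Submodule.span_singleton_le_iff_mem]; exact hxm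
  have heq : Submodule.span ℂ {x} = (Submodule.span ℂ {v})ᗮ := by
    apply Submodule.eq_of_le_of_finrank_le hle
    rw [h1, finrank_span_singleton hx]
  rw [← heq, Submodule.mem_span_singleton] at hym
  obtain ⟨μ, hμ⟩ := hym
  exact ⟨μ, hμ.symm⟩

lemma inner_smul_fun (a w : E2) (k : ℂ) (h : ∀ i, w i = k * a i) (z : E2) :
    (inner ℂ z w : ℂ) = k * inner ℂ z a := by
  simp only [PiLp.inner_apply, RCLike.inner_apply, Finset.mul_sum]
  exact Finset.sum_congr rfl fun i _ => by rw [h i]; ring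

/-- If V = span{a ⊗ b, c ⊗ d} with a ⊗ b and c ⊗ d linearly independent, and ā, b̄, c̄, d̄
are nonzero vectors orthogonal to a, b, c, d respectively, then the product vectors
ā ⊗ d̄ and c̄ ⊗ b̄ lie in V⊥ and span V⊥. -/
theorem orthocomplement_spanned_by_product_vectors
    (a b c d abar bbar cbar dbar : E2)
    (habar : abar ≠ 0) (hbbar : bbar ≠ 0) (hcbar : cbar ≠ 0) (hdbar : dbar ≠ 0)
    (hoa : (inner ℂ a abar : ℂ) = 0) (hob : (inner ℂ b bbar : ℂ) = 0)
    (hoc : (inner ℂ c cbar : ℂ) = 0) (hod : (inner ℂ d dbar : ℂ) = 0)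
    (hli : LinearIndependent ℂ ![tp a b, tp c d])
    (V : Submodule ℂ E4) (hV : V = Submodule.span ℂ {tp a b, tp c d}) :
    tp abar dbar ∈ Vᗮ ∧ tp cbar bbar ∈ Vᗮ ∧
      Vᗮ = Submodule.span ℂ {tp abar dbar, tp cbar bbar} := by
  -- a, b, c, d are nonzero
  have hab0 : tp a b ≠ 0 := hli.ne_zero 0
  have hcd0 : tp c d ≠ 0 := by
    have := hli.ne_zero 1; simpa using this
  have ha : a ≠ 0 := fun h => hab0 (by ext p; simp [tp, h])
  have hb : b ≠ 0 := fun h => hab0 (by ext p; simp [tp, h])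
  have hc : c ≠ 0 := fun h => hcd0 (by ext p; simp [tp, h])
  have hd : d ≠ 0 := fun h => hcd0 (by ext p; simp [tp, h])
  -- membership
  have key : ∀ x : E4, (inner ℂ (tp a b) x : ℂ) = 0 → (inner ℂ (tp c d) x : ℂ) = 0 → x ∈ Vᗮ := by
    intro x h1 h2
    rw [hV, Submodule.mem_orthogonal]
    intro u hu
    rw [Submodule.mem_span_pair] at hu
    obtain ⟨m, n, rfl⟩ := hu
    rw [inner_add_left, inner_smul_left, inner_smul_left, h1, h2]
    ring
  have m1 : tp abar dbar ∈ Vᗮ := by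
    apply key <;> rw [inner_tp]
    · rw [hoa, zero_mul]
    · rw [hod, mul_zero]
  have m2 : tp cbar bbar ∈ Vᗮ := by
    apply key <;> rw [inner_tp]
    · rw [hob, mul_zero]
    · rw [hoc, zero_mul]
  refine ⟨m1, m2, ?_⟩
  -- linear independence of the new pair
  have hli' : LinearIndependent ℂ ![tp abar dbar, tp cbar bbar] := by
    rw [LinearIndependent.pair_iff]
    intro s t hst
    have hpt : ∀ i j : Fin 2, s * (abar i * dbar j) + t * (cbar i * bbar j) = 0 := by
      intro i j
      have := congrArg (fun w : E4 => w (i, j)) hst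
      simpa [tp] using this
    have hs : s = 0 := by
      by_contra hs
      obtain ⟨i0, hi0⟩ := exists_ne_zero habar
      obtain ⟨j0, hj0⟩ := exists_ne_zero hdbar
      have h00 := hpt i0 j0
      have hne : t * (cbar i0 * bbar j0) ≠ 0 := by
        intro h
        rw [h, add_zero] at h00
        exact (mul_ne_zero hs (mul_ne_zero hi0 hj0)) h00
      have ht : t ≠ 0 := fun h => hne (by rw [h, zero_mul])
      have hci0 : cbar i0 ≠ 0 := fun h => hne (by rw [h]; ring)
      have hbj0 : bbar j0 ≠ 0 := fun h => hne (by rw [h]; ring)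
      -- abar = k • cbar
      set k : ℂ := -(t * bbar j0) / (s * dbar j0) with hk
      have habk : ∀ i, abar i = k * cbar i := by
        intro i
        have h := hpt i j0
        rw [hk, div_mul_eq_mul_div, eq_div_iff (mul_ne_zero hs hj0)]
        linear_combination h
      have hkne : k ≠ 0 := by
        intro h
        exact hi0 (by rw [habk i0, h, zero_mul])
      -- dbar = m • bbar
      set m : ℂ := -(t * cbar i0) / (s * abar i0) with hm
      have hdbm : ∀ j, dbar j = m * bbar j := by
        intro j
        have h := hpt i0 j
        rw [hm, div_mul_eq_mul_div, eq_div_iff (mul_ne_zero hs hi0)]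
        linear_combination h
      have hmne : m ≠ 0 := by
        intro h
        exact hj0 (by rw [hdbm j0, h, zero_mul])
      -- a, c ⊥ cbar  and  b, d ⊥ bbar
      have hac : (inner ℂ a cbar : ℂ) = 0 := by
        have := inner_smul_fun cbar abar k habk a
        rw [hoa] at this
        exact (mul_eq_zero.mp this.symm).resolve_left hkne
      have hdb : (inner ℂ d bbar : ℂ) = 0 := by
        have := inner_smul_fun bbar dbar m hdbm d
        rw [hod] at this
        exact (mul_eq_zero.mp this.symm).resolve_left hmne
      obtain ⟨μ, hμ⟩ := parallel_of_orth hcbar ha hac hoc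
      obtain ⟨ν, hν⟩ := parallel_of_orth hbbar hb hob hdb
      have : tp c d = (μ * ν) • tp a b := by rw [hμ, hν, tp_smul_smul]
      have := (LinearIndependent.pair_iff.mp hli (μ * ν) (-1) (by
        rw [this]; module)).2
      norm_num at this
    subst hs
    refine ⟨rfl, ?_⟩
    rw [zero_smul, zero_add] at hst
    rcases smul_eq_zero.mp hst with h | h
    · exact h
    · exact absurd h (tp_ne_zero hcbar hbbar)
  -- finrank computations
  have hr4 : Module.finrank ℂ E4 = 4 := by simp [finrank_euclideanSpace]
  have hrange : ∀ x y : E4, Set.range ![x, y] = {x, y} := by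
    intro x y
    simp only [Matrix.range_cons, Matrix.range_empty, Set.union_empty,
      Set.union_singleton]
    exact Set.pair_comm y x
  have hrV : Module.finrank ℂ V = 2 := by
    rw [hV, ← hrange]
    rw [finrank_span_eq_card hli]
    simp
  have hrVo : Module.finrank ℂ Vᗮ = 2 := by
    have := Submodule.finrank_add_finrank_orthogonal V
    rw [hrV, hr4] at this
    omega
  have hrW : Module.finrank ℂ (Submodule.span ℂ {tp abar dbar, tp cbar bbar}) = 2 := by
    rw [← hrange]
    rw [finrank_span_eq_card hli']
    simp
  symm
  apply Submodule.eq_of_le_of_finrank_le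
  · rw [Submodule.span_le]
    rintro x (rfl | rfl)
    · exact m1
    · exact m2
  · rw [hrVo, hrW]
end
end

section
/- Let V be a two-dimensional subspace of ℂ² ⊗ ℂ² whose orthogonal complement V⊥ contains exactly one product line, spanned by the unit vector τ. Then: (i) every orthogonal projector M on ℂ² ⊗ ℂ² satisfying Mv = v for all v ∈ V and whose kernel is spanned by product vectors has ker M ⊆ ℂτ; (ii) consequently, for any convex combination Ω = Σᵢ μᵢ Mᵢ of such projectors, the unit vector τ' ∈ V⊥ orthogonal to τ satisfies Ωτ' = τ', so the spectral gap ν(Ω) := 1 − λ_max((I − Π_V)Ω(I − Π_V)) equals 0. -/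
noncomputable section

namespace UnverifiableAux

lemma aux_pyth (a b : E4) (h : (inner ℂ a b : ℂ) = 0) : ‖a‖ ≤ ‖a + b‖ := by
  have h2 := norm_add_sq_eq_norm_sq_add_norm_sq_of_inner_eq_zero a b h
  nlinarith [norm_nonneg a, norm_nonneg b, norm_nonneg (a + b), sq_nonneg ‖b‖]

variable (M : E4 →L[ℂ] E4)

lemma sa_inner (hsa : IsSelfAdjoint M) (x y : E4) :
    (inner ℂ (M x) y : ℂ) = inner ℂ x (M y) := by
  have hadj : ContinuousLinearMap.adjoint M = M := by
    rw [← ContinuousLinearMap.star_eq_adjoint]; exact hsa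
  conv_lhs => rw [← hadj]
  exact ContinuousLinearMap.adjoint_inner_left M y x

lemma idem_apply (hidem : M.comp M = M) (x : E4) : M (M x) = M x := by
  have := ContinuousLinearMap.ext_iff.mp hidem x
  simpa using this

lemma proj_inner_zero (hsa : IsSelfAdjoint M) (hidem : M.comp M = M) (x : E4) :
    (inner ℂ (M x) (x - M x) : ℂ) = 0 := by
  rw [sa_inner M hsa, map_sub, idem_apply M hidem, sub_self, inner_zero_right]

lemma proj_norm_le (hsa : IsSelfAdjoint M) (hidem : M.comp M = M) (x : E4) :
    ‖M x‖ ≤ ‖x‖ := by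
  have := aux_pyth (M x) (x - M x) (proj_inner_zero M hsa hidem x)
  simpa using this

lemma fix_of_perp_ker (hsa : IsSelfAdjoint M) (hidem : M.comp M = M) (x : E4)
    (hx : ∀ y ∈ LinearMap.ker (M : E4 →ₗ[ℂ] E4), (inner ℂ y x : ℂ) = 0) : M x = x := by
  have hk : x - M x ∈ LinearMap.ker (M : E4 →ₗ[ℂ] E4) := by
    rw [LinearMap.mem_ker]
    simp [map_sub, idem_apply M hidem]
  have h1 : (inner ℂ (x - M x) x : ℂ) = 0 := hx _ hk
  have h2 : (inner ℂ (x - M x) (M x) : ℂ) = 0 := by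
    have h := proj_inner_zero M hsa hidem x
    rw [← inner_conj_symm (x - M x) (M x), h, map_zero]
  have h3 : (inner ℂ (x - M x) (x - M x) : ℂ) = 0 := by
    rw [inner_sub_right, h1, h2, sub_zero]
  have := inner_self_eq_zero.mp h3
  exact (sub_eq_zero.mp this).symm

end UnverifiableAux

/-- Let V be a two-dimensional subspace of ℂ² ⊗ ℂ² whose orthogonal complement contains
exactly one product line, spanned by the unit (product) vector τ.  (i) Every orthogonal
projector M fixing V pointwise whose kernel is spanned by product vectors has
ker M ⊆ ℂτ.  (ii) For any convex combination Ω = Σᵢ μᵢ Mᵢ of such projectors, the unit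
vector τ'"'"' ∈ V⊥ orthogonal to τ satisfies Ω τ'"'"' = τ'"'"', so the spectral gap
ν(Ω) = 1 − λ_max((I−Π)Ω(I−Π)) equals 0, i.e. λ_max((I−Π)Ω(I−Π)) = 1. -/
theorem unverifiable_subspace_no_LOCC_projective_strategy
    (V : Submodule ℂ E4) (hdim : Module.finrank ℂ V = 2)
    (τ : E4) (hτnorm : ‖τ‖ = 1) (hτprod : ∃ u v : E2, τ = tp u v) (hτmem : τ ∈ Vᗮ)
    (huniq : productLines Vᗮ = {Submodule.span ℂ {τ}}) :
    (∀ M : E4 →L[ℂ] E4, IsSelfAdjoint M → M.comp M = M → (∀ v ∈ V, M v = v) →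
      (∃ S : Set E4, (∀ w ∈ S, ∃ u v : E2, w = tp u v) ∧
        LinearMap.ker (M : E4 →ₗ[ℂ] E4) = Submodule.span ℂ S) →
      LinearMap.ker (M : E4 →ₗ[ℂ] E4) ≤ Submodule.span ℂ {τ}) ∧
    (∀ (n : ℕ) (μ : Fin n → ℝ) (M : Fin n → (E4 →L[ℂ] E4)),
      (∀ i, 0 ≤ μ i) → (∑ i, μ i) = 1 →
      (∀ i, IsSelfAdjoint (M i) ∧ (M i).comp (M i) = M i ∧ (∀ v ∈ V, M i v = v) ∧
        ∃ S : Set E4, (∀ w ∈ S, ∃ u v : E2, w = tp u v) ∧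
          LinearMap.ker (M i : E4 →ₗ[ℂ] E4) = Submodule.span ℂ S) →
      ∀ Ω : E4 →L[ℂ] E4, Ω = ∑ i, (μ i : ℂ) • M i →
      ∀ P : E4 →ₗ[ℂ] E4, (∀ w, P w = (V.orthogonalProjectionOnto w : E4)) →
      ∀ τ' : E4, τ' ∈ Vᗮ → ‖τ'‖ = 1 → (inner ℂ τ τ' : ℂ) = 0 →
        Ω τ' = τ' ∧
        IsGreatest {r : ℝ | ∃ w : E4, w ≠ 0 ∧
          Ω (w - P w) - P (Ω (w - P w)) = (r : ℂ) • w} 1) := by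
  open UnverifiableAux in
  have parti : ∀ M : E4 →L[ℂ] E4, IsSelfAdjoint M → M.comp M = M → (∀ v ∈ V, M v = v) →
      (∃ S : Set E4, (∀ w ∈ S, ∃ u v : E2, w = tp u v) ∧
        LinearMap.ker (M : E4 →ₗ[ℂ] E4) = Submodule.span ℂ S) →
      LinearMap.ker (M : E4 →ₗ[ℂ] E4) ≤ Submodule.span ℂ {τ} := by
    rintro M hsa hidem hfix ⟨S, hS, hker⟩
    have hkerV : LinearMap.ker (M : E4 →ₗ[ℂ] E4) ≤ Vᗮ := by
      intro w hw
      rw [Submodule.mem_orthogonal]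
      intro v hv
      have hMw : M w = 0 := hw
      calc (inner ℂ v w : ℂ) = inner ℂ (M v) w := by rw [hfix v hv]
        _ = inner ℂ v (M w) := sa_inner M hsa v w
        _ = 0 := by rw [hMw, inner_zero_right]
    rw [hker]
    rw [Submodule.span_le]
    intro w hw
    rcases hS w hw with ⟨u, v, rfl⟩
    by_cases h0 : tp u v = 0
    · rw [h0]; exact Submodule.zero_mem _
    · have hwk : tp u v ∈ LinearMap.ker (M : E4 →ₗ[ℂ] E4) := hker ▸ Submodule.subset_span hw
      have hline : Submodule.span ℂ {tp u v} ∈ productLines Vᗮ := by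
        refine ⟨u, v, h0, rfl, ?_⟩
        rw [Submodule.span_le, Set.singleton_subset_iff]
        exact hkerV hwk
      rw [huniq, Set.mem_singleton_iff] at hline
      have : tp u v ∈ Submodule.span ℂ {tp u v} := Submodule.mem_span_singleton_self _
      rw [hline] at this
      exact this
  refine ⟨parti, ?_⟩
  intro n μ M hμ hsum hM Ω hΩ P hP τ' hτ'mem hτ'norm hττ'
  have hτ'ne : τ' ≠ 0 := by
    intro h; rw [h, norm_zero] at hτ'norm; exact one_ne_zero hτ'norm.symm
  have hMτ' : ∀ i, M i τ' = τ' := by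
    intro i
    obtain ⟨hsa, hidem, hfix, hSi⟩ := hM i
    have hker : LinearMap.ker (M i : E4 →ₗ[ℂ] E4) ≤ Submodule.span ℂ {τ} := parti (M i) hsa hidem hfix hSi
    refine fix_of_perp_ker (M i) hsa hidem τ' ?_
    intro y hy
    obtain ⟨c, rfl⟩ := Submodule.mem_span_singleton.mp (hker hy)
    rw [inner_smul_left, hττ', mul_zero]
  have hΩτ' : Ω τ' = τ' := by
    rw [hΩ]
    have : (∑ i, (μ i : ℂ) • M i) τ' = ∑ i, (μ i : ℂ) • (M i τ') := by
      simp [ContinuousLinearMap.sum_apply]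
    rw [this]
    simp only [hMτ']
    rw [← Finset.sum_smul]
    have : (∑ i, (μ i : ℂ)) = 1 := by
      rw [← Complex.ofReal_sum, hsum, Complex.ofReal_one]
    rw [this, one_smul]
  have hPτ' : P τ' = 0 := by
    rw [hP τ', Submodule.orthogonalProjectionOnto_apply_of_mem_orthogonal hτ'mem]
    simp
  refine ⟨hΩτ', ?_, ?_⟩
  · exact ⟨τ', hτ'ne, by rw [hPτ', sub_zero, hΩτ', hPτ', sub_zero, Complex.ofReal_one, one_smul]⟩
  · rintro r ⟨w, hw0, hr⟩
    have hΩnorm : ∀ x : E4, ‖Ω x‖ ≤ ‖x‖ := by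
      intro x
      rw [hΩ]
      have h1 : (∑ i, (μ i : ℂ) • M i) x = ∑ i, (μ i : ℂ) • (M i x) := by
        simp [ContinuousLinearMap.sum_apply]
      rw [h1]
      calc ‖∑ i, (μ i : ℂ) • (M i x)‖ ≤ ∑ i, ‖(μ i : ℂ) • (M i x)‖ :=
            norm_sum_le _ _
        _ = ∑ i, μ i * ‖M i x‖ := by
            refine Finset.sum_congr rfl fun i _ => ?_
            rw [norm_smul, Complex.norm_real, Real.norm_eq_abs, abs_of_nonneg (hμ i)]
        _ ≤ ∑ i, μ i * ‖x‖ := by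
            refine Finset.sum_le_sum fun i _ => ?_
            obtain ⟨hsa, hidem, _, _⟩ := hM i
            exact mul_le_mul_of_nonneg_left (proj_norm_le (M i) hsa hidem x) (hμ i)
        _ = ‖x‖ := by rw [← Finset.sum_mul, hsum, one_mul]
    have hPnorm : ∀ x : E4, ‖x - P x‖ ≤ ‖x‖ := by
      intro x
      have hmem : x - (V.orthogonalProjectionOnto x : E4) ∈ Vᗮ :=
        V.sub_starProjection_mem_orthogonal x
      have hz : (inner ℂ ((V.orthogonalProjectionOnto x : E4))
          (x - (V.orthogonalProjectionOnto x : E4)) : ℂ) = 0 :=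
        (Submodule.mem_orthogonal V _).mp hmem _ (V.orthogonalProjectionOnto x).2
      have hinner : (inner ℂ (x - (V.orthogonalProjectionOnto x : E4))
          ((V.orthogonalProjectionOnto x : E4)) : ℂ) = 0 := by
        rw [← inner_conj_symm, hz, map_zero]
      have := aux_pyth _ _ hinner
      rw [hP x]
      simpa using this
    have hbound : |r| * ‖w‖ ≤ ‖w‖ := by
      calc |r| * ‖w‖ = ‖(r : ℂ) • w‖ := by
            rw [norm_smul, Complex.norm_real, Real.norm_eq_abs]
        _ = ‖Ω (w - P w) - P (Ω (w - P w))‖ := by rw [hr]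
        _ ≤ ‖Ω (w - P w)‖ := hPnorm _
        _ ≤ ‖w - P w‖ := hΩnorm _
        _ ≤ ‖w‖ := hPnorm w
    have hwpos : 0 < ‖w‖ := norm_pos_iff.mpr hw0
    have : |r| ≤ 1 := by
      by_contra h
      push_neg at h
      nlinarith
    linarith [le_abs_self r]
end
end

section
/- With tan α = (√5 − 1)/2 and α ∈ (0, π/2), the two product vectors |x₊⟩ ⊗ |x₊⟩ and |x̄₊⟩ ⊗ |x̄₊⟩, where |x₊⟩ = cos α |0⟩ + sin α |1⟩ and |x̄₊⟩ = sin α |0⟩ − cos α |1⟩, form an orthonormal basis of the two-dimensional subspace S⁺ = span{(|00⟩ + |11⟩)/√2, (|00⟩ + |01⟩ + |10⟩)/√3} of ℂ² ⊗ ℂ². -/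
noncomputable section

private lemma aux_on (c s : ℝ) (hc2 : c^2 + s^2 = 1) (u v : E2)
    (hu0 : u 0 = (c:ℂ)) (hu1 : u 1 = (s:ℂ))
    (hv0 : v 0 = (s:ℂ)) (hv1 : v 1 = (-c:ℂ)) :
    Orthonormal ℂ ![tp u u, tp v v] := by
  rw [orthonormal_iff_ite]
  intro i j
  fin_cases i <;> fin_cases j <;>
    simp [PiLp.inner_apply, tp, Fintype.sum_prod_type, Fin.sum_univ_two,
      hu0, hu1, hv0, hv1, RCLike.inner_apply, ← Complex.ofReal_neg, -inner_self_eq_norm_sq_to_K] <;>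
    norm_cast <;> nlinarith [hc2]

private lemma aux_A (c s : ℝ) (key : s * c = c^2 - s^2) (u : E2)
    (hu0 : u 0 = (c:ℂ)) (hu1 : u 1 = (s:ℂ)) :
    tp u u = ((s^2 : ℝ):ℂ) • (ket 0 0 + ket 1 1)
      + ((s*c : ℝ):ℂ) • (ket 0 0 + ket 0 1 + ket 1 0) := by
  ext p
  fin_cases p <;>
    simp [tp, ket, e, EuclideanSpace.single_apply, hu0, hu1] <;>
    norm_cast <;> nlinarith [key]

private lemma aux_B (c s : ℝ) (key : s * c = c^2 - s^2) (v : E2)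
    (hv0 : v 0 = (s:ℂ)) (hv1 : v 1 = (-c:ℂ)) :
    tp v v = ((c^2 : ℝ):ℂ) • (ket 0 0 + ket 1 1)
      - ((s*c : ℝ):ℂ) • (ket 0 0 + ket 0 1 + ket 1 0) := by
  ext p
  fin_cases p <;>
    simp [tp, ket, e, EuclideanSpace.single_apply, hv0, hv1] <;>
    norm_cast <;> nlinarith [key]

/-- The spans of two pairs of vectors agree when each pair is an explicit invertible linear
combination of the other. -/
private lemma aux_span (c s : ℝ) (hc2 : c^2 + s^2 = 1) (hs : 0 < s) (hc : 0 < c)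
    (v1 v2 w1 w2 : E4)
    (hA : v1 = ((s^2 : ℝ):ℂ) • w1 + ((s*c : ℝ):ℂ) • w2)
    (hB : v2 = ((c^2 : ℝ):ℂ) • w1 - ((s*c : ℝ):ℂ) • w2) :
    Submodule.span ℂ ({v1, v2} : Set E4) = Submodule.span ℂ ({w1, w2} : Set E4) := by
  have hsum : ((s^2 : ℝ) : ℂ) + ((c^2 : ℝ) : ℂ) = 1 := by norm_cast; linarith
  have hsc0 : ((s*c : ℝ) : ℂ) ≠ 0 := Complex.ofReal_ne_zero.mpr (by positivity)
  have hC : w1 = v1 + v2 := by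
    rw [hA, hB, add_add_sub_cancel, ← add_smul, hsum, one_smul]
  have hD : ((s*c : ℝ):ℂ) • w2 = ((c^2 : ℝ):ℂ) • v1 - ((s^2 : ℝ):ℂ) • v2 := by
    have h1 : ((s*c : ℝ):ℂ) • w2 = (((s*c)*(c^2+s^2) : ℝ):ℂ) • w2 := by
      rw [hc2, mul_one]
    rw [h1, hA, hB]
    push_cast
    module
  apply le_antisymm
  · rw [Submodule.span_le]
    rintro x (rfl | rfl)
    · rw [SetLike.mem_coe, Submodule.mem_span_pair]
      exact ⟨((s^2 : ℝ) : ℂ), ((s*c : ℝ) : ℂ), hA.symm⟩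
    · rw [SetLike.mem_coe, Submodule.mem_span_pair]
      refine ⟨((c^2 : ℝ) : ℂ), -((s*c : ℝ) : ℂ), ?_⟩
      rw [hB, neg_smul, ← sub_eq_add_neg]
  · rw [Submodule.span_le]
    rintro x (rfl | rfl)
    · rw [SetLike.mem_coe, Submodule.mem_span_pair]
      exact ⟨1, 1, by rw [one_smul, one_smul, ← hC]⟩
    · rw [SetLike.mem_coe, Submodule.mem_span_pair]
      refine ⟨((s*c : ℝ) : ℂ)⁻¹ * ((c^2 : ℝ) : ℂ), -(((s*c : ℝ) : ℂ)⁻¹ * ((s^2 : ℝ) : ℂ)), ?_⟩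
      rw [neg_smul, ← sub_eq_add_neg, mul_smul, mul_smul, ← smul_sub, ← hD,
        smul_smul, inv_mul_cancel₀ hsc0, one_smul]

/-- Rescaling two generators by nonzero scalars does not change their span. -/
private lemma aux_scale (a b : ℂ) (ha : a ≠ 0) (hb : b ≠ 0) (x y : E4) :
    Submodule.span ℂ ({a • x, b • y} : Set E4) = Submodule.span ℂ ({x, y} : Set E4) := by
  apply le_antisymm
  · rw [Submodule.span_le]
    rintro z (rfl | rfl)
    · rw [SetLike.mem_coe, Submodule.mem_span_pair]
      exact ⟨a, 0, by rw [zero_smul, add_zero]⟩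
    · rw [SetLike.mem_coe, Submodule.mem_span_pair]
      exact ⟨0, b, by rw [zero_smul, zero_add]⟩
  · rw [Submodule.span_le]
    rintro z (rfl | rfl)
    · rw [SetLike.mem_coe, Submodule.mem_span_pair]
      exact ⟨a⁻¹, 0, by rw [zero_smul, add_zero, smul_smul, inv_mul_cancel₀ ha, one_smul]⟩
    · rw [SetLike.mem_coe, Submodule.mem_span_pair]
      exact ⟨0, b⁻¹, by rw [zero_smul, zero_add, smul_smul, inv_mul_cancel₀ hb, one_smul]⟩

set_option maxHeartbeats 800000 in
/-- With tan α = (√5 − 1)/2 and α ∈ (0, π/2), the product vectors |x₊⟩ ⊗ |x₊⟩ and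
|x̄₊⟩ ⊗ |x̄₊⟩, where |x₊⟩ = cos α |0⟩ + sin α |1⟩ and |x̄₊⟩ = sin α |0⟩ − cos α |1⟩, form an
orthonormal basis of S⁺ = span{(|00⟩+|11⟩)/√2, (|00⟩+|01⟩+|10⟩)/√3}. -/
theorem product_orthonormal_basis_of_Splus
    (α : ℝ) (hα : α ∈ Set.Ioo 0 (Real.pi / 2))
    (htan : Real.tan α = (Real.sqrt 5 - 1) / 2)
    (xp xbp : E2)
    (hxp : xp = (Real.cos α : ℂ) • e 0 + (Real.sin α : ℂ) • e 1)
    (hxbp : xbp = (Real.sin α : ℂ) • e 0 - (Real.cos α : ℂ) • e 1)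
    (Splus : Submodule ℂ E4)
    (hS : Splus = Submodule.span ℂ
      {(Real.sqrt 2 : ℂ)⁻¹ • (ket 0 0 + ket 1 1),
       (Real.sqrt 3 : ℂ)⁻¹ • (ket 0 0 + ket 0 1 + ket 1 0)}) :
    Orthonormal ℂ ![tp xp xp, tp xbp xbp] ∧
      Submodule.span ℂ {tp xp xp, tp xbp xbp} = Splus := by
  have hc : 0 < Real.cos α := Real.cos_pos_of_mem_Ioo
    ⟨by linarith [hα.1, Real.pi_pos], hα.2⟩
  have hs : 0 < Real.sin α := Real.sin_pos_of_pos_of_lt_pi hα.1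
    (by linarith [hα.2, Real.pi_pos])
  have hc2 : Real.cos α ^ 2 + Real.sin α ^ 2 = 1 := Real.cos_sq_add_sin_sq α
  have key : Real.sin α * Real.cos α = Real.cos α ^ 2 - Real.sin α ^ 2 := by
    have hsc : Real.sin α = (Real.sqrt 5 - 1) / 2 * Real.cos α := by
      rw [← htan, Real.tan_eq_sin_div_cos]; field_simp
    have h5 : Real.sqrt 5 ^ 2 = 5 := Real.sq_sqrt (by norm_num)
    rw [hsc]; nlinarith [Real.sqrt_nonneg 5]
  have hu0 : xp 0 = (Real.cos α : ℂ) := by simp [hxp, e, EuclideanSpace.single_apply]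
  have hu1 : xp 1 = (Real.sin α : ℂ) := by simp [hxp, e, EuclideanSpace.single_apply]
  have hv0 : xbp 0 = (Real.sin α : ℂ) := by simp [hxbp, e, EuclideanSpace.single_apply]
  have hv1 : xbp 1 = (-Real.cos α : ℂ) := by simp [hxbp, e, EuclideanSpace.single_apply]
  have h2 : ((Real.sqrt 2 : ℝ) : ℂ) ≠ 0 := by
    exact_mod_cast Real.sqrt_ne_zero'.mpr (by norm_num)
  have h3 : ((Real.sqrt 3 : ℝ) : ℂ) ≠ 0 := by
    exact_mod_cast Real.sqrt_ne_zero'.mpr (by norm_num)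
  refine ⟨aux_on _ _ hc2 _ _ hu0 hu1 hv0 hv1, ?_⟩
  rw [hS,
    aux_span (Real.cos α) (Real.sin α) hc2 hs hc _ _ _ _
      (aux_A _ _ key _ hu0 hu1) (aux_B _ _ key _ hv0 hv1),
    aux_scale _ _ (inv_ne_zero h2) (inv_ne_zero h3) _ _]
end
end

section
/- The product vector |x₋⟩ ⊗ |x₋'⟩, where |x₋⟩ = (|0⟩ + e^{iπ/3}|1⟩)/√2 and |x₋'⟩ = (|0⟩ + e^{−iπ/3}|1⟩)/√2, is a unit vector orthogonal to the two-dimensional subspace S⁻ = span{(|00⟩ − |11⟩)/√2, (|01⟩ + |10⟩ − |00⟩)/√3} of ℂ² ⊗ ℂ². -/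
noncomputable section

/-- The product vector |x₋⟩ ⊗ |x₋'"'"'⟩, with |x₋⟩ = (|0⟩ + e^{iπ/3}|1⟩)/√2 and
|x₋'"'"'⟩ = (|0⟩ + e^{−iπ/3}|1⟩)/√2, is a unit vector orthogonal to the subspace
S⁻ = span{(|00⟩−|11⟩)/√2, (|01⟩+|10⟩−|00⟩)/√3}. -/
theorem product_unit_vector_orthogonal_to_Sminus
    (xm xm' : E2)
    (hxm : xm = (Real.sqrt 2 : ℂ)⁻¹ • (e 0 + Complex.exp ((Real.pi / 3 : ℂ) * Complex.I) • e 1))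
    (hxm' : xm' = (Real.sqrt 2 : ℂ)⁻¹ • (e 0 + Complex.exp (-(Real.pi / 3 : ℂ) * Complex.I) • e 1))
    (Sminus : Submodule ℂ E4)
    (hS : Sminus = Submodule.span ℂ
      {(Real.sqrt 2 : ℂ)⁻¹ • (ket 0 0 - ket 1 1),
       (Real.sqrt 3 : ℂ)⁻¹ • (ket 0 1 + ket 1 0 - ket 0 0)}) :
    ‖tp xm xm'‖ = 1 ∧ tp xm xm' ∈ Sminusᗮ := by
  set ω : ℂ := Complex.exp ((Real.pi / 3 : ℂ) * Complex.I) with hω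
  set ω' : ℂ := Complex.exp (-(Real.pi / 3 : ℂ) * Complex.I) with hω'
  have hmul : ω * ω' = 1 := by
    rw [hω, hω', ← Complex.exp_add]; ring_nf; exact Complex.exp_zero
  have hsum : ω + ω' = 1 := by
    rw [hω, hω', Complex.exp_mul_I, Complex.exp_mul_I]
    have h1 : Complex.cos (-(Real.pi / 3 : ℂ)) = Complex.cos (Real.pi / 3 : ℂ) := Complex.cos_neg _
    have h2 : Complex.sin (-(Real.pi / 3 : ℂ)) = -Complex.sin (Real.pi / 3 : ℂ) := Complex.sin_neg _
    have h3 : Complex.cos (Real.pi / 3 : ℂ) = 1 / 2 := by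
      have : ((Real.pi / 3 : ℝ) : ℂ) = (Real.pi / 3 : ℂ) := by push_cast; ring
      rw [← this, ← Complex.ofReal_cos, Real.cos_pi_div_three]; norm_num
    rw [h1, h2, h3]; ring
  have habs : ‖ω‖ = 1 := by
    rw [hω]
    have : ((Real.pi / 3 : ℂ)) = ((Real.pi / 3 : ℝ) : ℂ) := by push_cast; ring
    rw [this, Complex.norm_exp_ofReal_mul_I]
  have habs' : ‖ω'‖ = 1 := by
    have := habs
    have h : ω' = (starRingEnd ℂ) ω := by
      rw [hω, hω', ← Complex.exp_conj]; congr 1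
      simp [map_mul, map_div₀, Complex.conj_I, Complex.conj_ofReal, map_ofNat]
    rw [h, Complex.norm_conj]; exact habs
  have hx0 : xm 0 = ((Real.sqrt 2 : ℝ) : ℂ)⁻¹ := by
    rw [hxm]; simp [e, EuclideanSpace.single_apply]
  have hx1 : xm 1 = ((Real.sqrt 2 : ℝ) : ℂ)⁻¹ * ω := by
    rw [hxm]; simp [e, EuclideanSpace.single_apply]
  have hx0' : xm' 0 = ((Real.sqrt 2 : ℝ) : ℂ)⁻¹ := by
    rw [hxm']; simp [e, EuclideanSpace.single_apply]
  have hx1' : xm' 1 = ((Real.sqrt 2 : ℝ) : ℂ)⁻¹ * ω' := by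
    rw [hxm']; simp [e, EuclideanSpace.single_apply]
  have nc : ‖((Real.sqrt 2 : ℝ) : ℂ)⁻¹‖ = (Real.sqrt 2)⁻¹ := by
    simp [abs_of_nonneg (Real.sqrt_nonneg 2)]
  have nω : ‖ω‖ = 1 := habs
  have nω' : ‖ω'‖ = 1 := habs'
  have ha : (Real.sqrt 2)⁻¹ * (Real.sqrt 2)⁻¹ = 1/2 := by
    rw [← mul_inv, Real.mul_self_sqrt (by norm_num)]; norm_num
  constructor
  · rw [EuclideanSpace.norm_eq]
    simp only [Fintype.sum_prod_type, Fin.sum_univ_two, tp, WithLp.ofLp_toLp, hx0, hx1, hx0', hx1',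
      norm_mul, nc, nω, nω']
    norm_num [ha, Real.sqrt_eq_one]
  · rw [hS, Submodule.mem_orthogonal]
    intro u hu
    have key : ∀ w ∈ ({(Real.sqrt 2 : ℂ)⁻¹ • (ket 0 0 - ket 1 1),
       (Real.sqrt 3 : ℂ)⁻¹ • (ket 0 1 + ket 1 0 - ket 0 0)} : Set E4),
        (inner ℂ w (tp xm xm') : ℂ) = 0 := by
      intro w hw
      rcases hw with hw | hw <;> subst hw <;>
        simp only [inner_smul_left, inner_sub_left, inner_add_left, PiLp.inner_apply,
          RCLike.inner_apply, Fintype.sum_prod_type, Fin.sum_univ_two, ket, tp, WithLp.ofLp_toLp, e,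
          EuclideanSpace.single_apply, hx0, hx1, hx0', hx1'] <;>
        simp <;> ring_nf
      · linear_combination (-(((Real.sqrt 2:ℝ):ℂ)⁻¹ ^ 2)) * hmul
      · linear_combination (((Real.sqrt 2:ℝ):ℂ)⁻¹ ^ 2) * hsum
    induction hu using Submodule.span_induction with
    | mem x hx => exact key x hx
    | zero => exact inner_zero_left _
    | add x y _ _ hx hy => rw [inner_add_left, hx, hy, add_zero]
    | smul a x _ hx => rw [inner_smul_left, hx, mul_zero]
end
end
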